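/- For all integers m and e, the tetrahedral index satisfies the three-term recurrence in the first variable: I_Δ(m+1, e) + (u^{-2m-e} - u^{-e} - u^{e}) · I_Δ(m,e) + I_Δ(m-1, e) = 0, where u plays the role of q^{1/2} (so u^{-2m-e} = q^{-m-e/2}, u^{±e} = q^{±e/2}). -/

import Mathlib

open scoped BigOperators

/-- Finite q-Pochhammer symbol `(a;q)_n = ∏_{i=0}^{n-1} (1 - a q^i)`. -/
noncomputable def qPoch (a q : ℂ) (n : ℕ) : ℂ :=
  ∏ i ∈ Finset.range n, (1 - a * q ^ i)

/-- Infinite q-Pochhammer symbol `(a;q)_∞ = ∏_{i=0}^{∞} (1 - a q^i)`. -/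
noncomputable def qPochInf (a q : ℂ) : ℂ :=
  ∏' i : ℕ, (1 - a * q ^ i)

/-- The `n`-th term of the series defining the tetrahedral index `I_Δ(m,e)`,
with `q = u^2` and vanishing below `e₊ = max(-e,0)`. -/
noncomputable def tetTerm (u : ℂ) (m e : ℤ) (n : ℕ) : ℂ :=
  if (-e).toNat ≤ n then
    (-1 : ℂ) ^ n * u ^ ((n : ℤ) * ((n : ℤ) + 1) - (2 * (n : ℤ) + e) * m) /
      (qPoch (u ^ 2) (u ^ 2) n * qPoch (u ^ 2) (u ^ 2) ((n : ℤ) + e).toNat)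
  else 0

/-- The tetrahedral index `I_Δ(m,e) = Σ_{n=e₊}^∞ (-1)^n u^{n(n+1)-(2n+e)m}/((q;q)_n (q;q)_{n+e})`. -/
noncomputable def tetIndex (u : ℂ) (m e : ℤ) : ℂ := ∑' n : ℕ, tetTerm u m e n

/-- Telescoping certificate for the three-term recurrence in `m`. -/
noncomputable def tetG (u : ℂ) (m e : ℤ) (n : ℕ) : ℂ :=
  if (-e).toNat < n then
    (-1 : ℂ) ^ n * ((1 - (u ^ 2) ^ n) *
      ((u ^ (-e) - u ^ e * (u ^ 2) ^ n) *
        u ^ ((n : ℤ) * ((n : ℤ) + 1) - (2 * (n : ℤ) + e) * m - 2 * (n : ℤ)))) /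
      (qPoch (u ^ 2) (u ^ 2) n * qPoch (u ^ 2) (u ^ 2) ((n : ℤ) + e).toNat)
  else 0

lemma qPoch_succ (a q : ℂ) (n : ℕ) : qPoch a q (n + 1) = qPoch a q n * (1 - a * q ^ n) :=
  Finset.prod_range_succ _ _

lemma aux_norm_lt {u : ℂ} (hu1 : ‖u‖ < 1) (j : ℕ) : ‖u ^ 2 * (u ^ 2) ^ j‖ ≤ ‖u‖ ^ 2 := by
  rw [norm_mul, norm_pow, norm_pow, norm_pow]
  have h0 : (0:ℝ) ≤ ‖u‖ := norm_nonneg u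
  have h3 : (‖u‖ ^ 2) ^ j ≤ 1 := pow_le_one₀ (by positivity) (by nlinarith)
  nlinarith [pow_nonneg (by positivity : (0:ℝ) ≤ ‖u‖ ^ 2) j]

lemma aux_ne {u : ℂ} (hu1 : ‖u‖ < 1) (j : ℕ) : (1 : ℂ) - u ^ 2 * (u ^ 2) ^ j ≠ 0 := by
  intro h
  have h2 : (1 : ℂ) = u ^ 2 * (u ^ 2) ^ j := sub_eq_zero.mp h
  have := aux_norm_lt hu1 j
  rw [← h2, norm_one] at this
  nlinarith [norm_nonneg u]

lemma qPoch_ne {u : ℂ} (hu1 : ‖u‖ < 1) (j : ℕ) : qPoch (u ^ 2) (u ^ 2) j ≠ 0 := by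
  unfold qPoch
  exact Finset.prod_ne_zero_iff.mpr fun i _ => aux_ne hu1 i

lemma norm_aux_ge {u : ℂ} (hu1 : ‖u‖ < 1) (j : ℕ) :
    1 - ‖u‖ ^ 2 ≤ ‖(1 : ℂ) - u ^ 2 * (u ^ 2) ^ j‖ := by
  have h := norm_sub_norm_le (1 : ℂ) (u ^ 2 * (u ^ 2) ^ j)
  rw [norm_one] at h
  have := aux_norm_lt hu1 j
  linarith

lemma hx_pow (u : ℂ) (n : ℕ) : (u ^ 2) ^ n = u ^ (2 * (n : ℤ)) := by
  rw [← pow_mul, ← zpow_natCast]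
  norm_cast

lemma tet_ratio {u : ℂ} (hu : u ≠ 0) (hu1 : ‖u‖ < 1) (m' e : ℤ) (n : ℕ)
    (h : (-e).toNat ≤ n) :
    tetTerm u m' e (n + 1) = tetTerm u m' e n *
      (-(u ^ (2 * (n : ℤ) + 2 - 2 * m')) /
        ((1 - u ^ 2 * (u ^ 2) ^ n) * (1 - u ^ 2 * (u ^ 2) ^ ((n : ℤ) + e).toNat))) := by
  have hk1 : ((↑(n + 1) : ℤ) + e).toNat = ((n : ℤ) + e).toNat + 1 := by
    push_cast; omega
  have hP := qPoch_ne hu1 n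
  have hQ := qPoch_ne hu1 ((n : ℤ) + e).toNat
  have hc1 := aux_ne hu1 n
  have hc2 := aux_ne hu1 ((n : ℤ) + e).toNat
  simp only [tetTerm, if_pos h, if_pos (show (-e).toNat ≤ n + 1 by omega)]
  rw [hk1, qPoch_succ, qPoch_succ]
  rw [show (↑(n + 1) : ℤ) * ((↑(n + 1) : ℤ) + 1) - (2 * (↑(n + 1) : ℤ) + e) * m'
      = ((n : ℤ) * ((n : ℤ) + 1) - (2 * (n : ℤ) + e) * m') + (2 * (n : ℤ) + 2 - 2 * m') by
    push_cast; ring]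
  rw [zpow_add₀ hu]
  field_simp
  ring

lemma tet_summable {u : ℂ} (hu0 : 0 < ‖u‖) (hu1 : ‖u‖ < 1) (m' e : ℤ) :
    Summable (tetTerm u m' e) := by
  have hu : u ≠ 0 := norm_pos_iff.mp hu0
  have hq : ‖u‖ ^ 2 < 1 := by nlinarith [norm_nonneg u]
  have h12 : (0:ℝ) < 1 - ‖u‖ ^ 2 := by linarith
  have hεpos : (0:ℝ) < (1 - ‖u‖ ^ 2) ^ 2 / 2 := by positivity
  have hT : Filter.Tendsto (fun n : ℕ => ‖u ^ (2 * (n : ℤ) + 2 - 2 * m')‖)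
      Filter.atTop (nhds 0) := by
    have heq : ∀ n : ℕ, ‖u ^ (2 * (n : ℤ) + 2 - 2 * m')‖
        = ‖u ^ (2 - 2 * m')‖ * (‖u‖ ^ 2) ^ n := by
      intro n
      rw [show 2 * (n : ℤ) + 2 - 2 * m' = (2 - 2 * m') + 2 * (n : ℤ) by ring,
        zpow_add₀ hu, norm_mul, ← hx_pow, norm_pow, norm_pow]
    simp only [heq]
    have h2 := tendsto_pow_atTop_nhds_zero_of_lt_one (by positivity : (0:ℝ) ≤ ‖u‖ ^ 2) hq
    simpa using h2.const_mul (‖u ^ (2 - 2 * m')‖)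
  apply summable_of_ratio_norm_eventually_le (show (1:ℝ)/2 < 1 by norm_num)
  filter_upwards [hT.eventually (gt_mem_nhds hεpos), Filter.eventually_ge_atTop ((-e).toNat)]
    with n h1 h2
  rw [tet_ratio hu hu1 m' e n h2, norm_mul, mul_comm]
  apply mul_le_mul_of_nonneg_right _ (norm_nonneg _)
  have b1 := norm_aux_ge hu1 n
  have b2 := norm_aux_ge hu1 ((n : ℤ) + e).toNat
  rw [norm_div, norm_neg, norm_mul]
  calc ‖u ^ (2 * (n : ℤ) + 2 - 2 * m')‖ /
        (‖(1:ℂ) - u ^ 2 * (u ^ 2) ^ n‖ * ‖(1:ℂ) - u ^ 2 * (u ^ 2) ^ ((n : ℤ) + e).toNat‖)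
      ≤ ((1 - ‖u‖ ^ 2) ^ 2 / 2) / ((1 - ‖u‖ ^ 2) * (1 - ‖u‖ ^ 2)) := by
        apply div_le_div₀ hεpos.le h1.le (by positivity)
        exact mul_le_mul b1 b2 h12.le (norm_nonneg _)
    _ = 1 / 2 := by
        rw [div_eq_div_iff (by positivity) (by norm_num : (2:ℝ) ≠ 0)]
        ring
  
lemma hxk_pow {u : ℂ} (hu : u ≠ 0) (e : ℤ) (n : ℕ) (h : (-e).toNat ≤ n) :
    (u ^ 2) ^ ((n : ℤ) + e).toNat = u ^ (2 * (n : ℤ)) * (u ^ e * u ^ e) := by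
  rw [hx_pow, ← zpow_add₀ hu, ← zpow_add₀ hu]
  congr 1
  omega

set_option maxHeartbeats 1000000 in
lemma tet_key {u : ℂ} (hu : u ≠ 0) (hu1 : ‖u‖ < 1) (m e : ℤ) (n : ℕ) :
    tetTerm u (m + 1) e n + (u ^ (-2 * m - e) - u ^ (-e) - u ^ e) * tetTerm u m e n +
      tetTerm u (m - 1) e n = tetG u m e n - tetG u m e (n + 1) := by
  rcases lt_or_ge n ((-e).toNat) with hlt | hge
  · simp only [tetTerm, tetG, if_neg (show ¬ (-e).toNat ≤ n by omega),
      if_neg (show ¬ (-e).toNat < n by omega), if_neg (show ¬ (-e).toNat < n + 1 by omega)]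
    ring
  · -- main case : n ≥ e₊
    have hP := qPoch_ne hu1 n
    have hQ := qPoch_ne hu1 ((n : ℤ) + e).toNat
    have hc1' := aux_ne hu1 n
    have hc2' := aux_ne hu1 ((n : ℤ) + e).toNat
    have hx := hx_pow u n
    have hxk := hxk_pow hu e n hge
    have hk1 : ((↑(n + 1) : ℤ) + e).toNat = ((n : ℤ) + e).toNat + 1 := by push_cast; omega
    -- abbreviations via explicit powers
    have hvan : tetG u m e n = (-1 : ℂ) ^ n * ((1 - (u ^ 2) ^ n) *
        ((u ^ (-e) - u ^ e * (u ^ 2) ^ n) *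
          u ^ ((n : ℤ) * ((n : ℤ) + 1) - (2 * (n : ℤ) + e) * m - 2 * (n : ℤ)))) /
        (qPoch (u ^ 2) (u ^ 2) n * qPoch (u ^ 2) (u ^ 2) ((n : ℤ) + e).toNat) := by
      rcases eq_or_lt_of_le hge with heq | hlt'
      · rw [tetG, if_neg (by omega)]
        rcases le_or_gt 0 e with he | he
        · have hn0 : n = 0 := by omega
          subst hn0
          simp
        · have hzero : u ^ (-e) - u ^ e * (u ^ 2) ^ n = 0 := by
            rw [hx, ← zpow_add₀ hu, sub_eq_zero]
            congr 1
            omega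
          rw [hzero]
          simp
      · rw [tetG, if_pos hlt']
    have h1 : tetTerm u (m + 1) e n = (-1 : ℂ) ^ n *
        (u ^ ((n : ℤ) * ((n : ℤ) + 1) - (2 * (n : ℤ) + e) * m) *
          ((u ^ (2 * (n : ℤ)))⁻¹ * (u ^ e)⁻¹)) /
        (qPoch (u ^ 2) (u ^ 2) n * qPoch (u ^ 2) (u ^ 2) ((n : ℤ) + e).toNat) := by
      simp only [tetTerm, if_pos hge]
      rw [show (n : ℤ) * ((n : ℤ) + 1) - (2 * (n : ℤ) + e) * (m + 1)
          = ((n : ℤ) * ((n : ℤ) + 1) - (2 * (n : ℤ) + e) * m) + (-(2 * (n : ℤ)) + -e) by ring,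
        zpow_add₀ hu, zpow_add₀ hu, zpow_neg, zpow_neg]
    have h2 : tetTerm u m e n = (-1 : ℂ) ^ n *
        u ^ ((n : ℤ) * ((n : ℤ) + 1) - (2 * (n : ℤ) + e) * m) /
        (qPoch (u ^ 2) (u ^ 2) n * qPoch (u ^ 2) (u ^ 2) ((n : ℤ) + e).toNat) := by
      simp only [tetTerm, if_pos hge]
    have h3 : tetTerm u (m - 1) e n = (-1 : ℂ) ^ n *
        (u ^ ((n : ℤ) * ((n : ℤ) + 1) - (2 * (n : ℤ) + e) * m) *
          (u ^ (2 * (n : ℤ)) * u ^ e)) /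
        (qPoch (u ^ 2) (u ^ 2) n * qPoch (u ^ 2) (u ^ 2) ((n : ℤ) + e).toNat) := by
      simp only [tetTerm, if_pos hge]
      rw [show (n : ℤ) * ((n : ℤ) + 1) - (2 * (n : ℤ) + e) * (m - 1)
          = ((n : ℤ) * ((n : ℤ) + 1) - (2 * (n : ℤ) + e) * m) + (2 * (n : ℤ) + e) by ring,
        zpow_add₀ hu, zpow_add₀ hu]
    have h4 : u ^ (-2 * m - e) = (u ^ (2 * m))⁻¹ * (u ^ e)⁻¹ := by
      rw [show -2 * m - e = -(2 * m) + -e by ring, zpow_add₀ hu, zpow_neg, zpow_neg]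
    have h5 : u ^ (-e) = (u ^ e)⁻¹ := zpow_neg u e
    have h6 : tetG u m e (n + 1) = (-1 : ℂ) ^ n * (-1) * ((1 - u ^ 2 * u ^ (2 * (n : ℤ))) *
        (((u ^ e)⁻¹ - u ^ e * (u ^ (2 * (n : ℤ)) * u ^ 2)) *
          (u ^ ((n : ℤ) * ((n : ℤ) + 1) - (2 * (n : ℤ) + e) * m) * (u ^ (2 * m))⁻¹))) /
        ((qPoch (u ^ 2) (u ^ 2) n * (1 - u ^ 2 * u ^ (2 * (n : ℤ)))) *
         (qPoch (u ^ 2) (u ^ 2) ((n : ℤ) + e).toNat *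
           (1 - u ^ 2 * (u ^ (2 * (n : ℤ)) * (u ^ e * u ^ e))))) := by
      rw [tetG, if_pos (show (-e).toNat < n + 1 by omega)]
      rw [hk1, qPoch_succ, qPoch_succ]
      rw [show (↑(n + 1) : ℤ) * ((↑(n + 1) : ℤ) + 1) - (2 * (↑(n + 1) : ℤ) + e) * m
            - 2 * (↑(n + 1) : ℤ)
          = ((n : ℤ) * ((n : ℤ) + 1) - (2 * (n : ℤ) + e) * m) + (-(2 * m)) by
        push_cast; ring]
      rw [zpow_add₀ hu]
      rw [pow_succ (-1 : ℂ) n, pow_succ (u ^ 2) n, hx, hxk]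
      simp only [zpow_neg]
      ring
    have h7 : tetG u m e n = (-1 : ℂ) ^ n * ((1 - u ^ (2 * (n : ℤ))) *
        (((u ^ e)⁻¹ - u ^ e * u ^ (2 * (n : ℤ))) *
          (u ^ ((n : ℤ) * ((n : ℤ) + 1) - (2 * (n : ℤ) + e) * m) * (u ^ (2 * (n : ℤ)))⁻¹))) /
        (qPoch (u ^ 2) (u ^ 2) n * qPoch (u ^ 2) (u ^ 2) ((n : ℤ) + e).toNat) := by
      rw [hvan]
      rw [show (n : ℤ) * ((n : ℤ) + 1) - (2 * (n : ℤ) + e) * m - 2 * (n : ℤ)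
          = ((n : ℤ) * ((n : ℤ) + 1) - (2 * (n : ℤ) + e) * m) + (-(2 * (n : ℤ))) by ring,
        zpow_add₀ hu, hx]
      simp only [zpow_neg]
    rw [h1, h2, h3, h4, h5, h6, h7]
    set P := qPoch (u ^ 2) (u ^ 2) n with hPdef
    set Q := qPoch (u ^ 2) (u ^ 2) ((n : ℤ) + e).toNat with hQdef
    set t := u ^ ((n : ℤ) * ((n : ℤ) + 1) - (2 * (n : ℤ) + e) * m) with htdef
    set x := u ^ (2 * (n : ℤ)) with hxdef
    set b := u ^ e with hbdef
    set w := u ^ (2 * m) with hwdef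
    have hc1 : (1 : ℂ) - u ^ 2 * x ≠ 0 := by rw [← hx]; exact hc1'
    have hc2 : (1 : ℂ) - u ^ 2 * (x * (b * b)) ≠ 0 := by rw [← hxk]; exact hc2'
    have hxne : x ≠ 0 := by rw [hxdef]; exact zpow_ne_zero _ hu
    have hbne : b ≠ 0 := by rw [hbdef]; exact zpow_ne_zero _ hu
    have hwne : w ≠ 0 := by rw [hwdef]; exact zpow_ne_zero _ hu
    have hPQ : P * Q ≠ 0 := mul_ne_zero hP hQ
    have hD : (P * (1 - u ^ 2 * x)) * (Q * (1 - u ^ 2 * (x * (b * b)))) ≠ 0 :=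
      mul_ne_zero (mul_ne_zero hP hc1) (mul_ne_zero hQ hc2)
    have e1 : (-1 : ℂ) ^ n * (t * (x⁻¹ * b⁻¹)) / (P * Q)
        = ((-1 : ℂ) ^ n * (t * (x⁻¹ * b⁻¹)) * ((1 - u ^ 2 * x) * (1 - u ^ 2 * (x * (b * b)))))
          / ((P * (1 - u ^ 2 * x)) * (Q * (1 - u ^ 2 * (x * (b * b))))) := by
      rw [div_eq_div_iff hPQ hD]; ring
    have e2 : (-1 : ℂ) ^ n * t / (P * Q)
        = ((-1 : ℂ) ^ n * t * ((1 - u ^ 2 * x) * (1 - u ^ 2 * (x * (b * b)))))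
          / ((P * (1 - u ^ 2 * x)) * (Q * (1 - u ^ 2 * (x * (b * b))))) := by
      rw [div_eq_div_iff hPQ hD]; ring
    have e3 : (-1 : ℂ) ^ n * (t * (x * b)) / (P * Q)
        = ((-1 : ℂ) ^ n * (t * (x * b)) * ((1 - u ^ 2 * x) * (1 - u ^ 2 * (x * (b * b)))))
          / ((P * (1 - u ^ 2 * x)) * (Q * (1 - u ^ 2 * (x * (b * b))))) := by
      rw [div_eq_div_iff hPQ hD]; ring
    have e7 : (-1 : ℂ) ^ n * ((1 - x) * ((b⁻¹ - b * x) * (t * x⁻¹))) / (P * Q)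
        = ((-1 : ℂ) ^ n * ((1 - x) * ((b⁻¹ - b * x) * (t * x⁻¹)))
            * ((1 - u ^ 2 * x) * (1 - u ^ 2 * (x * (b * b)))))
          / ((P * (1 - u ^ 2 * x)) * (Q * (1 - u ^ 2 * (x * (b * b))))) := by
      rw [div_eq_div_iff hPQ hD]; ring
    rw [e1, e2, e3, e7, ← mul_div_assoc, ← add_div, ← add_div, div_sub_div_same,
      div_eq_div_iff hD hD]
    field_simp [hxne, hbne, hwne]
    ring

/-- three-term recurrence in `m`:
`I_Δ(m+1,e) + (q^{-m-e/2} - q^{-e/2} - q^{e/2}) I_Δ(m,e) + I_Δ(m-1,e) = 0`, `u = q^{1/2}`. -/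
theorem stmt_6 (u : ℂ) (hu0 : 0 < ‖u‖) (hu1 : ‖u‖ < 1) (m e : ℤ) :
    tetIndex u (m + 1) e + (u ^ (-2 * m - e) - u ^ (-e) - u ^ e) * tetIndex u m e +
      tetIndex u (m - 1) e = 0 := by
  have hu : u ≠ 0 := norm_pos_iff.mp hu0
  set c : ℂ := u ^ (-2 * m - e) - u ^ (-e) - u ^ e with hc
  have hS1 : Summable (tetTerm u (m + 1) e) := tet_summable hu0 hu1 _ _
  have hS2 : Summable (tetTerm u m e) := tet_summable hu0 hu1 _ _
  have hS3 : Summable (tetTerm u (m - 1) e) := tet_summable hu0 hu1 _ _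
  have hST : Summable (fun n => tetTerm u (m + 1) e n + c * tetTerm u m e n
      + tetTerm u (m - 1) e n) := (hS1.add (hS2.mul_left c)).add hS3
  have hkey : ∀ n : ℕ, tetTerm u (m + 1) e n + c * tetTerm u m e n + tetTerm u (m - 1) e n
      = tetG u m e n - tetG u m e (n + 1) := fun n => tet_key hu hu1 m e n
  have hpart : ∀ N : ℕ, ∑ n ∈ Finset.range N, (tetTerm u (m + 1) e n + c * tetTerm u m e n
      + tetTerm u (m - 1) e n) = - tetG u m e N := by
    intro N
    induction N with
    | zero => simp [tetG]
    | succ N ih => rw [Finset.sum_range_succ, ih, hkey]; ring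
  -- `tetG` is dominated by `tetTerm u (m+1) e`
  have hGrel : ∀ n : ℕ, ‖tetG u m e n‖
      ≤ (2 * ((‖u ^ (-e)‖ + ‖u ^ e‖) * ‖u ^ e‖)) * ‖tetTerm u (m + 1) e n‖ := by
    intro n
    rcases le_or_gt n ((-e).toNat) with hle | hlt
    · rw [tetG, if_neg (by omega)]
      simp only [norm_zero]
      positivity
    · have hrel : tetG u m e n = ((1 - (u ^ 2) ^ n) * ((u ^ (-e) - u ^ e * (u ^ 2) ^ n) * u ^ e))
          * tetTerm u (m + 1) e n := by
        rw [tetG, if_pos hlt, tetTerm, if_pos (by omega : (-e).toNat ≤ n)]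
        rw [show (n : ℤ) * ((n : ℤ) + 1) - (2 * (n : ℤ) + e) * m - 2 * (n : ℤ)
            = ((n : ℤ) * ((n : ℤ) + 1) - (2 * (n : ℤ) + e) * (m + 1)) + e by ring,
          zpow_add₀ hu]
        field_simp
      rw [hrel, norm_mul]
      apply mul_le_mul_of_nonneg_right _ (norm_nonneg _)
      rw [norm_mul]
      have hq1 : ‖((u : ℂ) ^ 2) ^ n‖ ≤ 1 := by
        rw [norm_pow, norm_pow]
        exact pow_le_one₀ (by positivity) (pow_le_one₀ (norm_nonneg u) hu1.le)
      have b1 : ‖(1 : ℂ) - (u ^ 2) ^ n‖ ≤ 2 := by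
        calc ‖(1 : ℂ) - (u ^ 2) ^ n‖ ≤ ‖(1 : ℂ)‖ + ‖((u : ℂ) ^ 2) ^ n‖ := norm_sub_le _ _
          _ ≤ 2 := by rw [norm_one]; linarith
      have b2 : ‖(u ^ (-e) - u ^ e * (u ^ 2) ^ n) * u ^ e‖
          ≤ (‖u ^ (-e)‖ + ‖u ^ e‖) * ‖u ^ e‖ := by
        rw [norm_mul]
        apply mul_le_mul_of_nonneg_right _ (norm_nonneg _)
        calc ‖u ^ (-e) - u ^ e * (u ^ 2) ^ n‖
            ≤ ‖u ^ (-e)‖ + ‖u ^ e * (u ^ 2) ^ n‖ := norm_sub_le _ _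
          _ ≤ ‖u ^ (-e)‖ + ‖u ^ e‖ := by
              rw [norm_mul]
              nlinarith [norm_nonneg ((u : ℂ) ^ e), norm_nonneg ((u : ℂ) ^ (-e))]
      exact mul_le_mul b1 b2 (norm_nonneg _) (by norm_num)
  have hGto : Filter.Tendsto (fun N => tetG u m e N) Filter.atTop (nhds 0) := by
    apply squeeze_zero_norm hGrel
    have h1 : Filter.Tendsto (fun n => ‖tetTerm u (m + 1) e n‖) Filter.atTop (nhds 0) := by
      simpa using hS1.tendsto_atTop_zero.norm
    simpa using h1.const_mul (2 * ((‖(u : ℂ) ^ (-e)‖ + ‖(u : ℂ) ^ e‖) * ‖(u : ℂ) ^ e‖))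
  have hzero : HasSum (fun n => tetTerm u (m + 1) e n + c * tetTerm u m e n
      + tetTerm u (m - 1) e n) 0 := by
    rw [hST.hasSum_iff_tendsto_nat]
    apply (Filter.tendsto_congr hpart).mpr
    simpa using hGto.neg
  have htsum := hzero.tsum_eq
  rw [Summable.tsum_add (hS1.add (hS2.mul_left c)) hS3,
    Summable.tsum_add hS1 (hS2.mul_left c), tsum_mul_left] at htsum
  simpa [tetIndex, hc] using htsum
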